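/- Let T be a nonnegative injective self-adjoint operator on a Hilbert space h, f ∈ D(T^{-1/2}), and Ψ ∈ D(dΓ(T)^{1/2}) in the bosonic Fock space over h. Then Ψ ∈ D(a(f)) and ‖a(f)Ψ‖ ≤ ‖T^{-1/2} f‖ · ‖dΓ(T)^{1/2} Ψ‖. -/

import Mathlib

open MeasureTheory
open scoped ENNReal NNReal

/-- The annihilation operator on the concrete bosonic Fock space over `L²(α, μ)`:
`(a(f)Φ)^{(n)}(k₁,…,kₙ) = √(n+1) ∫ f(k) Φ^{(n+1)}(k,k₁,…,kₙ) dμ(k)`. -/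
noncomputable def fockAnn {α : Type*} [MeasurableSpace α] (μ : Measure α)
    (f : α → ℂ) (Φ : ∀ n : ℕ, (Fin n → α) → ℂ) (n : ℕ) (ks : Fin n → α) : ℂ :=
  (Real.sqrt (n + 1) : ℂ) * ∫ x, f x * Φ (n + 1) (Fin.cons x ks) ∂μ

lemma ofReal_norm_eq_coe_nnnorm {E : Type*} [SeminormedAddCommGroup E] (a : E) :
    ENNReal.ofReal ‖a‖ = (‖a‖₊ : ℝ≥0∞) := ENNReal.ofReal_eq_coe_nnreal _

lemma Real.ennnorm_eq_ofReal_abs (r : ℝ) : (‖r‖₊ : ℝ≥0∞) = ENNReal.ofReal |r| := by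
  rw [← Real.norm_eq_abs, ofReal_norm_eq_coe_nnnorm]

protected lemma Measurable.ennnorm {β E : Type*} [MeasurableSpace β] [NormedAddCommGroup E]
    [MeasurableSpace E] [OpensMeasurableSpace E] {f : β → E} (hf : Measurable f) :
    Measurable fun x => (‖f x‖₊ : ℝ≥0∞) := hf.nnnorm.coe_nnreal_ennreal

/-- Weighted Cauchy-Schwarz for the pairing `∫ f g`. -/
lemma fockAux_CS {α : Type*} [MeasurableSpace α] (μ : Measure α)
    (ω : α → ℝ) (hωm : Measurable ω) (hωpos : ∀ᵐ x ∂μ, 0 < ω x)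
    (f : α → ℂ) (hfm : Measurable f) (g : α → ℂ) (hgm : Measurable g) :
    (‖∫ x, f x * g x ∂μ‖₊ : ℝ≥0∞) ^ 2 ≤
      (∫⁻ x, (‖f x‖₊ : ℝ≥0∞) ^ 2 / ENNReal.ofReal (ω x) ∂μ) *
      ∫⁻ x, ENNReal.ofReal (ω x) * (‖g x‖₊ : ℝ≥0∞) ^ 2 ∂μ := by
  set u : α → ℝ≥0∞ := fun x => (‖f x‖₊ : ℝ≥0∞) * (ENNReal.ofReal (ω x)) ^ (-(1/2) : ℝ)
  set v : α → ℝ≥0∞ := fun x => (ENNReal.ofReal (ω x)) ^ ((1/2) : ℝ) * (‖g x‖₊ : ℝ≥0∞)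
  have hum : Measurable u := (hfm.ennnorm).mul ((ENNReal.measurable_ofReal.comp hωm).pow_const _)
  have hvm : Measurable v := ((ENNReal.measurable_ofReal.comp hωm).pow_const _).mul hgm.ennnorm
  have huv : ∀ᵐ x ∂μ, (‖f x * g x‖₊ : ℝ≥0∞) = u x * v x := by
    filter_upwards [hωpos] with x hx
    have h0 : ENNReal.ofReal (ω x) ≠ 0 := by simp [ENNReal.ofReal_eq_zero, not_le, hx]
    have ht : ENNReal.ofReal (ω x) ≠ ⊤ := ENNReal.ofReal_ne_top
    have : (ENNReal.ofReal (ω x)) ^ (-(1/2) : ℝ) * (ENNReal.ofReal (ω x)) ^ ((1/2) : ℝ) = 1 := by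
      rw [← ENNReal.rpow_add _ _ h0 ht]; norm_num
    simp only [u, v, nnnorm_mul, ENNReal.coe_mul]
    calc (‖f x‖₊ : ℝ≥0∞) * ‖g x‖₊
        = (‖f x‖₊ : ℝ≥0∞) * (((ENNReal.ofReal (ω x)) ^ (-(1/2) : ℝ) *
            (ENNReal.ofReal (ω x)) ^ ((1/2) : ℝ)) * ‖g x‖₊) := by
          rw [this, one_mul]
      _ = _ := by ring
  have hconj : Real.HolderConjugate 2 2 := Real.HolderConjugate.two_two
  have hH := ENNReal.lintegral_mul_le_Lp_mul_Lq μ hconj hum.aemeasurable hvm.aemeasurable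
  have enat : ∀ y : ℝ≥0∞, y ^ (2:ℝ) = y ^ (2:ℕ) := by
    intro y; rw [← ENNReal.rpow_natCast]; norm_num
  have hu2 : ∀ x, u x ^ (2:ℝ) = (‖f x‖₊ : ℝ≥0∞) ^ 2 / ENNReal.ofReal (ω x) := by
    intro x
    have e2 : ((ENNReal.ofReal (ω x)) ^ (-(1/2):ℝ)) ^ (2:ℝ) = (ENNReal.ofReal (ω x))⁻¹ := by
      rw [← ENNReal.rpow_mul]; norm_num [ENNReal.rpow_neg_one]
    simp only [u]
    rw [ENNReal.mul_rpow_of_nonneg _ _ (by norm_num : (0:ℝ) ≤ 2), e2, enat, div_eq_mul_inv]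
  have hv2 : ∀ x, v x ^ (2:ℝ) = ENNReal.ofReal (ω x) * (‖g x‖₊ : ℝ≥0∞) ^ 2 := by
    intro x
    have e2 : ((ENNReal.ofReal (ω x)) ^ ((1/2):ℝ)) ^ (2:ℝ) = ENNReal.ofReal (ω x) := by
      rw [← ENNReal.rpow_mul]; norm_num
    simp only [v]
    rw [ENNReal.mul_rpow_of_nonneg _ _ (by norm_num : (0:ℝ) ≤ 2), e2, enat]
  calc (‖∫ x, f x * g x ∂μ‖₊ : ℝ≥0∞) ^ 2
      ≤ (∫⁻ x, (‖f x * g x‖₊ : ℝ≥0∞) ∂μ) ^ 2 :=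
        pow_le_pow_left' (enorm_integral_le_lintegral_enorm _) 2
    _ = (∫⁻ x, u x * v x ∂μ) ^ 2 := by rw [lintegral_congr_ae huv]
    _ ≤ ((∫⁻ x, u x ^ (2:ℝ) ∂μ) ^ (1/(2:ℝ)) * (∫⁻ x, v x ^ (2:ℝ) ∂μ) ^ (1/(2:ℝ))) ^ 2 :=
        pow_le_pow_left' hH 2
    _ = (∫⁻ x, u x ^ (2:ℝ) ∂μ) * (∫⁻ x, v x ^ (2:ℝ) ∂μ) := by
        rw [mul_pow, ← ENNReal.rpow_natCast (_ ^ _) 2, ← ENNReal.rpow_natCast (_ ^ (1/(2:ℝ))) 2,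
          ← ENNReal.rpow_mul, ← ENNReal.rpow_mul]
        norm_num
    _ = _ := by simp_rw [hu2, hv2]

/-- Measurability of the cons map. -/
lemma fockAux_meas_cons {α : Type*} [MeasurableSpace α] (n : ℕ) :
    Measurable fun p : (Fin n → α) × α => (Fin.cons p.2 p.1 : Fin (n+1) → α) := by
  apply measurable_pi_lambda
  intro i
  refine Fin.cases ?_ ?_ i
  · simpa using measurable_snd
  · intro j; simpa [Function.comp_def] using (measurable_pi_apply j).comp measurable_fst

/-- Fubini for the cons decomposition of the product measure. -/
lemma fockAux_fubini {α : Type*} [MeasurableSpace α] (μ : Measure α) [SigmaFinite μ]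
    (G : (Fin (n+1) → α) → ℝ≥0∞) (hG : Measurable G) :
    ∫⁻ ks, ∫⁻ x, G (Fin.cons x ks) ∂μ ∂(Measure.pi fun _ : Fin n => μ)
      = ∫⁻ k, G k ∂(Measure.pi fun _ : Fin (n+1) => μ) := by
  have mp := ((measurePreserving_piFinSuccAbove (fun _ : Fin (n+1) => μ) 0).symm
    (MeasurableEquiv.piFinSuccAbove (fun _ : Fin (n+1) => α) 0))
  have h1 := mp.lintegral_comp hG
  have h2 : ∀ p : α × (Fin n → α),
      G ((MeasurableEquiv.piFinSuccAbove (fun _ : Fin (n+1) => α) 0).symm p)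
        = G (Fin.cons p.1 p.2) := by
    intro p
    congr 1
    rw [MeasurableEquiv.piFinSuccAbove_symm_apply]
    simp [Fin.insertNthEquiv, Fin.insertNth_zero']
  rw [← h1]
  have h3 : ∫⁻ p, G ((MeasurableEquiv.piFinSuccAbove (fun _ : Fin (n+1) => α) 0).symm p)
      ∂((μ).prod (Measure.pi fun _ : Fin n => μ))
      = ∫⁻ p : α × (Fin n → α), G (Fin.cons p.1 p.2)
        ∂((μ).prod (Measure.pi fun _ : Fin n => μ)) := by
    exact lintegral_congr h2
  rw [h3]
  have hmeas : Measurable fun p : α × (Fin n → α) => G (Fin.cons p.1 p.2) := by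
    refine hG.comp ?_
    exact (fockAux_meas_cons n).comp measurable_swap
  rw [lintegral_prod _ hmeas.aemeasurable]
  exact (lintegral_lintegral_swap (f := fun x ks => G (Fin.cons x ks)) hmeas.aemeasurable).symm

/-- Coordinate-permutation invariance of integrals against a symmetric function. -/
lemma fockAux_perm {α : Type*} [MeasurableSpace α] (μ : Measure α) [SigmaFinite μ]
    {n : ℕ} (G : (Fin n → α) → ℝ≥0∞) (hG : Measurable G) (σ : Equiv.Perm (Fin n)) :
    ∫⁻ k, G (k ∘ σ) ∂(Measure.pi fun _ : Fin n => μ)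
      = ∫⁻ k, G k ∂(Measure.pi fun _ : Fin n => μ) := by
  have mp := measurePreserving_piCongrLeft (fun _ : Fin n => μ) σ.symm
  have h1 := mp.lintegral_comp hG
  rw [← h1]
  refine lintegral_congr fun k => ?_
  congr 1
  funext j
  have := MeasurableEquiv.piCongrLeft_apply_apply σ.symm (β := fun _ : Fin n => α) k (σ j)
  simpa using this.symm

/-- If `T` is the (nonnegative, injective, self-adjoint) operator of multiplication by
`ω > 0` a.e. on `L²(α,μ)`, `f ∈ D(T^{-1/2})` and `Ψ ∈ D(dΓ(T)^{1/2})`, then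
`Ψ ∈ D(a(f))` (the squared sector norms of `a(f)Ψ` are summable) and
`‖a(f)Ψ‖² ≤ ‖T^{-1/2}f‖² ‖dΓ(T)^{1/2}Ψ‖²`. -/
theorem stmt_8 {α : Type*} [MeasurableSpace α] (μ : Measure α) [SigmaFinite μ]
    (ω : α → ℝ) (hωm : Measurable ω) (hωpos : ∀ᵐ x ∂μ, 0 < ω x)
    (f : α → ℂ) (hfm : Measurable f)
    (hfdom : Integrable (fun x => ‖f x‖ ^ 2 / ω x) μ)
    (Φ : ∀ n : ℕ, (Fin n → α) → ℂ)
    (hΦm : ∀ n, Measurable (Φ n))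
    (hΦsym : ∀ n (σ : Equiv.Perm (Fin n)) (k : Fin n → α), Φ n (k ∘ σ) = Φ n k)
    (hΦL2 : ∀ n, Integrable (fun k : Fin n → α => ‖Φ n k‖ ^ 2)
        (Measure.pi fun _ : Fin n => μ))
    (hΦfock : Summable fun n : ℕ =>
        ∫ k : Fin n → α, ‖Φ n k‖ ^ 2 ∂(Measure.pi fun _ : Fin n => μ))
    (hΦdom : ∀ n, Integrable
        (fun k : Fin n → α => (∑ i, ω (k i)) * ‖Φ n k‖ ^ 2)
        (Measure.pi fun _ : Fin n => μ))
    (hΦdom' : Summable fun n : ℕ =>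
        ∫ k : Fin n → α, (∑ i, ω (k i)) * ‖Φ n k‖ ^ 2 ∂(Measure.pi fun _ : Fin n => μ)) :
    (Summable fun n : ℕ =>
        ∫ k : Fin n → α, ‖fockAnn μ f Φ n k‖ ^ 2 ∂(Measure.pi fun _ : Fin n => μ)) ∧
    (∑' n : ℕ, ∫ k : Fin n → α, ‖fockAnn μ f Φ n k‖ ^ 2 ∂(Measure.pi fun _ : Fin n => μ))
      ≤ (∫ x, ‖f x‖ ^ 2 / ω x ∂μ) *
        ∑' n : ℕ, ∫ k : Fin n → α, (∑ i, ω (k i)) * ‖Φ n k‖ ^ 2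
          ∂(Measure.pi fun _ : Fin n => μ) := by
  classical
  -- a.e. positivity of the weights on every sector
  have hpos_pi : ∀ m : ℕ, ∀ᵐ k ∂(Measure.pi fun _ : Fin m => μ), ∀ i, 0 < ω (k i) := by
    intro m
    rw [ae_all_iff]
    intro i
    have h0 : μ {x | ¬ 0 < ω x} = 0 := by simpa [ae_iff] using hωpos
    have := Measure.pi_eval_preimage_null (fun _ : Fin m => μ) (i := i) h0
    simpa [ae_iff, Function.eval] using this
  set Cl : ℝ≥0∞ := ∫⁻ x, (‖f x‖₊ : ℝ≥0∞)^2 / ENNReal.ofReal (ω x) ∂μ with hCldef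
  set B : ℕ → ℝ≥0∞ := fun m => ∫⁻ k : Fin m → α,
      ENNReal.ofReal (∑ i, ω (k i)) * (‖Φ m k‖₊ : ℝ≥0∞)^2
      ∂(Measure.pi fun _ : Fin m => μ) with hBdef
  set A : ℕ → ℝ≥0∞ := fun n => ∫⁻ ks : Fin n → α,
      (‖fockAnn μ f Φ n ks‖₊ : ℝ≥0∞)^2 ∂(Measure.pi fun _ : Fin n => μ) with hAdef
  have hwm : ∀ m : ℕ, Measurable fun k : Fin m → α => (∑ i, ω (k i)) := fun m =>
    Finset.measurable_sum _ fun i _ => hωm.comp (measurable_pi_apply i)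
  -- B is finite and matches the Bochner integrals
  have hBfin : ∀ m, B m ≠ ∞ := by
    intro m
    have hle : B m ≤ ∫⁻ k, (‖(∑ i, ω (k i)) * ‖Φ m k‖^2‖₊ : ℝ≥0∞)
        ∂(Measure.pi fun _ : Fin m => μ) := by
      refine lintegral_mono fun k => ?_
      calc ENNReal.ofReal (∑ i, ω (k i)) * (‖Φ m k‖₊:ℝ≥0∞)^2
          ≤ ENNReal.ofReal |∑ i, ω (k i)| * (‖Φ m k‖₊:ℝ≥0∞)^2 := by
            gcongr
            exact le_abs_self _
        _ = _ := by
            rw [Real.ennnorm_eq_ofReal_abs, abs_mul, ENNReal.ofReal_mul (abs_nonneg _),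
              abs_of_nonneg (pow_nonneg (norm_nonneg _) 2), ENNReal.ofReal_pow (norm_nonneg _),
              ofReal_norm_eq_coe_nnnorm]
    exact (lt_of_le_of_lt hle (hΦdom m).2).ne
  have hBeq : ∀ m, ∫ k : Fin m → α, (∑ i, ω (k i)) * ‖Φ m k‖^2
      ∂(Measure.pi fun _ : Fin m => μ) = (B m).toReal := by
    intro m
    rw [integral_eq_lintegral_of_nonneg_ae (f := fun k => (∑ i, ω (k i)) * ‖Φ m k‖^2)
      (by filter_upwards [hpos_pi m] with k hk
          exact mul_nonneg (Finset.sum_nonneg fun i _ => (hk i).le)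
            (pow_nonneg (norm_nonneg _) 2))
      ((hwm m).mul ((hΦm m).norm.pow_const 2)).aestronglyMeasurable]
    simp only [hBdef]
    congr 1
    refine lintegral_congr_ae ?_
    filter_upwards [hpos_pi m] with k hk
    rw [ENNReal.ofReal_mul (Finset.sum_nonneg fun i _ => (hk i).le),
      ENNReal.ofReal_pow (norm_nonneg _), ofReal_norm_eq_coe_nnnorm]
  -- Cl is finite and matches the Bochner integral
  have hClptw : ∀ᵐ x ∂μ,
      (‖f x‖₊:ℝ≥0∞)^2 / ENNReal.ofReal (ω x) = ENNReal.ofReal (‖f x‖^2 / ω x) := by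
    filter_upwards [hωpos] with x hx
    rw [ENNReal.ofReal_div_of_pos hx, ENNReal.ofReal_pow (norm_nonneg _),
      ofReal_norm_eq_coe_nnnorm]
  have hCfin : Cl ≠ ∞ := by
    have hle : Cl ≤ ∫⁻ x, (‖‖f x‖^2 / ω x‖₊ : ℝ≥0∞) ∂μ := by
      rw [hCldef, lintegral_congr_ae hClptw]
      refine lintegral_mono fun x => ?_
      rw [Real.ennnorm_eq_ofReal_abs]
      exact ENNReal.ofReal_le_ofReal (le_abs_self _)
    exact (lt_of_le_of_lt hle hfdom.2).ne
  have hCeq : ∫ x, ‖f x‖^2 / ω x ∂μ = Cl.toReal := by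
    rw [integral_eq_lintegral_of_nonneg_ae (f := fun x => ‖f x‖^2 / ω x)
      (by filter_upwards [hωpos] with x hx
          exact div_nonneg (by positivity) hx.le)
      ((hfm.norm.pow_const 2).div hωm).aestronglyMeasurable]
    rw [hCldef]
    exact congrArg ENNReal.toReal (lintegral_congr_ae hClptw).symm
  -- measurability of each annihilation sector
  have hIm : ∀ n : ℕ, Measurable fun ks : Fin n → α =>
      ∫ x, f x * Φ (n+1) (Fin.cons x ks) ∂μ := by
    intro n
    have hF : StronglyMeasurable fun p : (Fin n → α) × α =>
        f p.2 * Φ (n+1) (Fin.cons p.2 p.1) :=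
      ((hfm.comp measurable_snd).mul
        ((hΦm (n+1)).comp (fockAux_meas_cons n))).stronglyMeasurable
    exact hF.integral_prod_right'.measurable
  have hAm : ∀ n : ℕ, Measurable (fockAnn μ f Φ n) := fun n =>
    measurable_const.mul (hIm n)
  have hAeq : ∀ n : ℕ, ∫ ks : Fin n → α, ‖fockAnn μ f Φ n ks‖^2
      ∂(Measure.pi fun _ : Fin n => μ) = (A n).toReal := by
    intro n
    rw [integral_eq_lintegral_of_nonneg_ae
      (Filter.Eventually.of_forall fun ks => by positivity)
      (((hAm n).norm.pow_const 2).aestronglyMeasurable)]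
    simp only [hAdef]
    congr 1
    refine lintegral_congr fun ks => ?_
    rw [ENNReal.ofReal_pow (norm_nonneg _), ofReal_norm_eq_coe_nnnorm]
  -- the key sectorwise bound
  have hkey : ∀ n : ℕ, A n ≤ Cl * B (n+1) := by
    intro n
    set G : (Fin (n+1) → α) → ℝ≥0∞ :=
      fun k => ENNReal.ofReal (ω (k 0)) * (‖Φ (n+1) k‖₊ : ℝ≥0∞)^2 with hGdef
    have hGm : Measurable G :=
      (ENNReal.measurable_ofReal.comp (hωm.comp (measurable_pi_apply 0))).mul
        ((hΦm (n+1)).ennnorm.pow_const 2)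
    set D : ℝ≥0∞ := ∫⁻ k, G k ∂(Measure.pi fun _ : Fin (n+1) => μ) with hDdef
    have hnorm : ∀ ks : Fin n → α, (‖fockAnn μ f Φ n ks‖₊ : ℝ≥0∞)^2
        = ((n+1 : ℕ) : ℝ≥0∞) * (‖∫ x, f x * Φ (n+1) (Fin.cons x ks) ∂μ‖₊ : ℝ≥0∞)^2 := by
      intro ks
      show ((‖(Real.sqrt (n + 1) : ℂ) * ∫ x, f x * Φ (n + 1) (Fin.cons x ks) ∂μ‖₊ : ℝ≥0∞))^2 = _
      rw [nnnorm_mul, ENNReal.coe_mul, mul_pow]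
      congr 1
      rw [← ofReal_norm_eq_coe_nnnorm, ← ENNReal.ofReal_pow (norm_nonneg _), Complex.norm_real,
        Real.norm_eq_abs, abs_of_nonneg (Real.sqrt_nonneg _), Real.sq_sqrt (by positivity),
        show ((n:ℝ)+1) = ((n+1 : ℕ):ℝ) by push_cast; ring, ENNReal.ofReal_natCast]
    have hCS : ∀ ks : Fin n → α, (‖∫ x, f x * Φ (n+1) (Fin.cons x ks) ∂μ‖₊ : ℝ≥0∞)^2
        ≤ Cl * ∫⁻ x, G (Fin.cons x ks) ∂μ := by
      intro ks
      have hg : Measurable fun x => Φ (n+1) (Fin.cons x ks) :=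
        (hΦm (n+1)).comp ((fockAux_meas_cons n).comp (measurable_const.prodMk measurable_id))
      have h := fockAux_CS μ ω hωm hωpos f hfm _ hg
      simpa [hGdef, Fin.cons_zero, hCldef] using h
    have hWm : Measurable fun ks : Fin n → α => ∫⁻ x, G (Fin.cons x ks) ∂μ := by
      have : Measurable fun p : (Fin n → α) × α => G (Fin.cons p.2 p.1) :=
        hGm.comp (fockAux_meas_cons n)
      exact this.lintegral_prod_right'
    have hW : ∫⁻ ks, ∫⁻ x, G (Fin.cons x ks) ∂μ ∂(Measure.pi fun _ : Fin n => μ) = D :=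
      fockAux_fubini μ G hGm
    have hBD : B (n+1) = ((n+1:ℕ) : ℝ≥0∞) * D := by
      have h1 : B (n+1) = ∑ i : Fin (n+1), ∫⁻ k, ENNReal.ofReal (ω (k i)) *
          (‖Φ (n+1) k‖₊ : ℝ≥0∞)^2 ∂(Measure.pi fun _ : Fin (n+1) => μ) := by
        simp only [hBdef]
        have hs := lintegral_finset_sum (μ := Measure.pi fun _ : Fin (n+1) => μ) Finset.univ
          (f := fun (i : Fin (n+1)) (k : Fin (n+1) → α) =>
            ENNReal.ofReal (ω (k i)) * (‖Φ (n+1) k‖₊:ℝ≥0∞)^2)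
          (fun i _ => (ENNReal.measurable_ofReal.comp (hωm.comp (measurable_pi_apply i))).mul
            ((hΦm (n+1)).ennnorm.pow_const 2))
        rw [← hs]
        refine lintegral_congr_ae ?_
        filter_upwards [hpos_pi (n+1)] with k hk
        rw [ENNReal.ofReal_sum_of_nonneg (fun i _ => (hk i).le), Finset.sum_mul]
      have h2 : ∀ i : Fin (n+1), ∫⁻ k, ENNReal.ofReal (ω (k i)) *
          (‖Φ (n+1) k‖₊:ℝ≥0∞)^2 ∂(Measure.pi fun _ : Fin (n+1) => μ) = D := by
        intro i
        have e : ∀ k : Fin (n+1) → α, ENNReal.ofReal (ω (k i)) * (‖Φ (n+1) k‖₊:ℝ≥0∞)^2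
            = G (k ∘ Equiv.swap 0 i) := by
          intro k
          simp only [hGdef, Function.comp]
          rw [hΦsym (n+1) (Equiv.swap 0 i) k]
          congr 3
        rw [lintegral_congr e, fockAux_perm μ G hGm (Equiv.swap 0 i), hDdef]
      rw [h1]
      simp only [h2]
      rw [Finset.sum_const, Finset.card_univ, Fintype.card_fin, nsmul_eq_mul]
    calc A n = ∫⁻ ks, ((n+1:ℕ):ℝ≥0∞) *
          (‖∫ x, f x * Φ (n+1) (Fin.cons x ks) ∂μ‖₊:ℝ≥0∞)^2
          ∂(Measure.pi fun _ : Fin n => μ) := by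
            simp only [hAdef]; exact lintegral_congr hnorm
      _ ≤ ∫⁻ ks, ((n+1:ℕ):ℝ≥0∞) * (Cl * ∫⁻ x, G (Fin.cons x ks) ∂μ)
          ∂(Measure.pi fun _ : Fin n => μ) :=
            lintegral_mono fun ks => mul_le_mul_right (hCS ks) _
      _ = ((n+1:ℕ):ℝ≥0∞) * Cl * ∫⁻ ks, ∫⁻ x, G (Fin.cons x ks) ∂μ
          ∂(Measure.pi fun _ : Fin n => μ) := by
            simp_rw [← mul_assoc]
            exact lintegral_const_mul _ hWm
      _ = ((n+1:ℕ):ℝ≥0∞) * Cl * D := by rw [hW]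
      _ = Cl * B (n+1) := by rw [hBD]; ring
  -- assemble
  have hAfin : ∀ n, A n ≠ ∞ := fun n =>
    ((hkey n).trans_lt (ENNReal.mul_lt_top hCfin.lt_top (hBfin (n+1)).lt_top)).ne
  have hBsummable : Summable fun m => (B m).toReal := hΦdom'.congr fun m => hBeq m
  have hBtsum : ∑' m, B m ≠ ∞ := by
    have h1 : ∀ m, B m = ENNReal.ofReal ((B m).toReal) := fun m =>
      (ENNReal.ofReal_toReal (hBfin m)).symm
    rw [tsum_congr h1, ← ENNReal.ofReal_tsum_of_nonneg (fun m => ENNReal.toReal_nonneg)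
      hBsummable]
    exact ENNReal.ofReal_ne_top
  have htot : ∑' n, A n ≤ Cl * ∑' m, B m := by
    calc ∑' n, A n ≤ ∑' n, Cl * B (n+1) := ENNReal.tsum_le_tsum hkey
      _ = Cl * ∑' n, B (n+1) := ENNReal.tsum_mul_left
      _ ≤ Cl * ∑' m, B m :=
          mul_le_mul_right (ENNReal.tsum_comp_le_tsum_of_injective Nat.succ_injective B) _
  have hfin2 : Cl * ∑' m, B m ≠ ∞ := ENNReal.mul_ne_top hCfin hBtsum
  constructor
  · refine Summable.congr (ENNReal.summable_toReal (htot.trans_lt hfin2.lt_top).ne) ?_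
    intro n; exact (hAeq n).symm
  · rw [tsum_congr hAeq, ← ENNReal.tsum_toReal_eq hAfin, hCeq, tsum_congr hBeq,
      ← ENNReal.tsum_toReal_eq hBfin, ← ENNReal.toReal_mul]
    exact ENNReal.toReal_mono hfin2 htot
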